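/- arXiv:2110.06250 — 3 statements merged into one kernel-verified Lean document; each statement's English description precedes it below -/
import Mathlib

section
/- (Theorem 1.) Consider a permutation invariant model and two permutation invariant measurable loss-type functions L, h : 𝒵ⁿ × 𝒯ⁿ × 𝒜 → [0,∞] (PI with respect to the same action ã on 𝒜). Fix θ ∈ 𝒯ⁿ, a set T̄ ⊆ 𝒯, and α ≥ 0. For a measurable rule δ define the mixture functionals B_θ(δ) = (1/n!) Σ_{g∈S_n} ∫ L(z, g(θ), δ(z)) dP_{g(θ)}(z) and, for θ' ∈ 𝒯ⁿ, H_{θ'}(δ) = (1/n!) Σ_{g∈S_n} ∫ h(z, g(θ'), δ(z)) dP_{g(θ')}(z). Suppose δ^B is a permutation invariant measurable rule satisfying H_{θ'}(δ^B) ≤ α for all θ' ∈ T̄ⁿ, and B_θ(δ^B) ≤ B_θ(δ) for every measurable rule δ satisfying H_{θ'}(δ) ≤ α for all θ' ∈ T̄ⁿ. Then: (i) δ^B is feasible for the original problem, i.e. ∫ h(z, θ', δ^B(z)) dP_{θ'}(z) ≤ α for all θ' ∈ T̄ⁿ; and (ii) R(θ, δ^B) ≤ R(θ, δ) for every permutation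 invariant measurable rule δ with ∫ h(z, θ', δ(z)) dP_{θ'}(z) ≤ α for all θ' ∈ T̄ⁿ. Hence R(θ, δ^B) is the minimum risk at θ over all feasible permutation invariant rules. -/
open MeasureTheory
open scoped ENNReal

/-- **Theorem 1.** For a permutation invariant model and permutation invariant loss-type
functions `L`, `h`, a permutation invariant rule `δᴮ` which is feasible for the mixture
problem and minimizes the mixture objective among all feasible rules, is feasible for the
original problem and minimizes the risk at `θ` among all feasible permutation invariant
rules. -/
theorem oracle_PI_rule_via_mixture_problem
    {n : ℕ} (hn : 1 ≤ n)
    {𝓩 𝓣 𝓐 : Type*} [MeasurableSpace 𝓩] [MeasurableSpace 𝓣] [MeasurableSpace 𝓐]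
    -- the model
    (P : (Fin n → 𝓣) → Measure (Fin n → 𝓩))
    (hPprob : ∀ θ, IsProbabilityMeasure (P θ))
    -- the model is permutation invariant
    (hPmodelPI : ∀ (θ : Fin n → 𝓣) (g : Equiv.Perm (Fin n)),
      (P θ).map (fun z i => z (g i)) = P (fun i => θ (g i)))
    -- a measurable action of the symmetric group on the action space
    (act : Equiv.Perm (Fin n) → 𝓐 → 𝓐)
    (hact_meas : ∀ g, Measurable (act g))
    (hact_mul : ∀ (g g' : Equiv.Perm (Fin n)) (a : 𝓐), act (g * g') a = act g' (act g a))
    (hact_one : ∀ a : 𝓐, act 1 a = a)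
    -- two measurable, permutation invariant loss-type functions L and h
    (L h : (Fin n → 𝓩) → (Fin n → 𝓣) → 𝓐 → ℝ≥0∞)
    (hLmeas : Measurable fun p : (Fin n → 𝓩) × (Fin n → 𝓣) × 𝓐 => L p.1 p.2.1 p.2.2)
    (hhmeas : Measurable fun p : (Fin n → 𝓩) × (Fin n → 𝓣) × 𝓐 => h p.1 p.2.1 p.2.2)
    (hLPI : ∀ (z : Fin n → 𝓩) (θ : Fin n → 𝓣) (a : 𝓐) (g : Equiv.Perm (Fin n)),
      L (fun i => z (g i)) (fun i => θ (g i)) (act g a) = L z θ a)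
    (hhPI : ∀ (z : Fin n → 𝓩) (θ : Fin n → 𝓣) (a : 𝓐) (g : Equiv.Perm (Fin n)),
      h (fun i => z (g i)) (fun i => θ (g i)) (act g a) = h z θ a)
    -- fixed parameter value, constraint set and level
    (θ : Fin n → 𝓣) (Tbar : Set 𝓣) (α : ℝ≥0∞)
    -- the mixture functionals B_θ and H_{θ'}
    (B : ((Fin n → 𝓩) → 𝓐) → ℝ≥0∞)
    (hB : ∀ δ : (Fin n → 𝓩) → 𝓐,
      B δ = ((n.factorial : ℝ≥0∞))⁻¹ *
        ∑ g : Equiv.Perm (Fin n),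
          ∫⁻ z, L z (fun i => θ (g i)) (δ z) ∂P (fun i => θ (g i)))
    (H : (Fin n → 𝓣) → ((Fin n → 𝓩) → 𝓐) → ℝ≥0∞)
    (hH : ∀ (θ' : Fin n → 𝓣) (δ : (Fin n → 𝓩) → 𝓐),
      H θ' δ = ((n.factorial : ℝ≥0∞))⁻¹ *
        ∑ g : Equiv.Perm (Fin n),
          ∫⁻ z, h z (fun i => θ' (g i)) (δ z) ∂P (fun i => θ' (g i)))
    -- δᴮ : a permutation invariant measurable rule solving the mixture problem
    (δB : (Fin n → 𝓩) → 𝓐) (hδBmeas : Measurable δB)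
    (hδBPI : ∀ (g : Equiv.Perm (Fin n)) (z : Fin n → 𝓩),
      δB (fun i => z (g i)) = act g (δB z))
    (hδBfeas : ∀ θ' : Fin n → 𝓣, (∀ i, θ' i ∈ Tbar) → H θ' δB ≤ α)
    (hδBopt : ∀ δ : (Fin n → 𝓩) → 𝓐, Measurable δ →
      (∀ θ' : Fin n → 𝓣, (∀ i, θ' i ∈ Tbar) → H θ' δ ≤ α) → B δB ≤ B δ) :
    -- (i) δᴮ is feasible for the original problem, and
    -- (ii) δᴮ minimizes the risk at θ among all feasible permutation invariant rules
    (∀ θ' : Fin n → 𝓣, (∀ i, θ' i ∈ Tbar) →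
        ∫⁻ z, h z θ' (δB z) ∂P θ' ≤ α) ∧
      (∀ δ : (Fin n → 𝓩) → 𝓐, Measurable δ →
        (∀ (g : Equiv.Perm (Fin n)) (z : Fin n → 𝓩), δ (fun i => z (g i)) = act g (δ z)) →
        (∀ θ' : Fin n → 𝓣, (∀ i, θ' i ∈ Tbar) → ∫⁻ z, h z θ' (δ z) ∂P θ' ≤ α) →
        ∫⁻ z, L z θ (δB z) ∂P θ ≤ ∫⁻ z, L z θ (δ z) ∂P θ) := by
  have hfac0 : ((n.factorial : ℝ≥0∞)) ≠ 0 := by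
    exact_mod_cast Nat.cast_ne_zero.mpr (Nat.factorial_ne_zero n)
  have hfacT : ((n.factorial : ℝ≥0∞)) ≠ ⊤ := ENNReal.natCast_ne_top _
  -- key lemma: for a PI rule δ and PI loss F, the g-term equals the identity term
  have key : ∀ (F : (Fin n → 𝓩) → (Fin n → 𝓣) → 𝓐 → ℝ≥0∞),
      Measurable (fun p : (Fin n → 𝓩) × (Fin n → 𝓣) × 𝓐 => F p.1 p.2.1 p.2.2) →
      (∀ (z : Fin n → 𝓩) (θ₀ : Fin n → 𝓣) (a : 𝓐) (g : Equiv.Perm (Fin n)),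
        F (fun i => z (g i)) (fun i => θ₀ (g i)) (act g a) = F z θ₀ a) →
      ∀ (δ : (Fin n → 𝓩) → 𝓐), Measurable δ →
      (∀ (g : Equiv.Perm (Fin n)) (z : Fin n → 𝓩), δ (fun i => z (g i)) = act g (δ z)) →
      ∀ (θ' : Fin n → 𝓣) (g : Equiv.Perm (Fin n)),
        ∫⁻ z, F z (fun i => θ' (g i)) (δ z) ∂P (fun i => θ' (g i))
          = ∫⁻ z, F z θ' (δ z) ∂P θ' := by
    intro F hFmeas hFPI δ hδmeas hδPI θ' g
    have hφ : Measurable (fun z : Fin n → 𝓩 => fun i => z (g i)) :=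
      measurable_pi_lambda _ fun i => measurable_pi_apply (g i)
    have hint : Measurable (fun z : Fin n → 𝓩 => F z (fun i => θ' (g i)) (δ z)) :=
      hFmeas.comp (measurable_id.prodMk (measurable_const.prodMk hδmeas))
    rw [← hPmodelPI θ' g, lintegral_map hint hφ]
    refine lintegral_congr fun z => ?_
    simp only [hδPI g z, hFPI z θ' (δ z) g]
  -- mixture functionals collapse for PI rules
  have hsum : ∀ (x : ℝ≥0∞),
      ((n.factorial : ℝ≥0∞))⁻¹ * ∑ _g : Equiv.Perm (Fin n), x = x := by
    intro x
    rw [Finset.sum_const, Finset.card_univ, Fintype.card_perm, Fintype.card_fin,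
      nsmul_eq_mul, ← mul_assoc, ENNReal.inv_mul_cancel hfac0 hfacT, one_mul]
  have hHeq : ∀ (δ : (Fin n → 𝓩) → 𝓐), Measurable δ →
      (∀ (g : Equiv.Perm (Fin n)) (z : Fin n → 𝓩), δ (fun i => z (g i)) = act g (δ z)) →
      ∀ θ' : Fin n → 𝓣, H θ' δ = ∫⁻ z, h z θ' (δ z) ∂P θ' := by
    intro δ hδmeas hδPI θ'
    rw [hH]
    have : ∀ g : Equiv.Perm (Fin n),
        ∫⁻ z, h z (fun i => θ' (g i)) (δ z) ∂P (fun i => θ' (g i))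
          = ∫⁻ z, h z θ' (δ z) ∂P θ' := key h hhmeas hhPI δ hδmeas hδPI θ'
    rw [Finset.sum_congr rfl fun g _ => this g, hsum]
  have hBeq : ∀ (δ : (Fin n → 𝓩) → 𝓐), Measurable δ →
      (∀ (g : Equiv.Perm (Fin n)) (z : Fin n → 𝓩), δ (fun i => z (g i)) = act g (δ z)) →
      B δ = ∫⁻ z, L z θ (δ z) ∂P θ := by
    intro δ hδmeas hδPI
    rw [hB]
    have : ∀ g : Equiv.Perm (Fin n),
        ∫⁻ z, L z (fun i => θ (g i)) (δ z) ∂P (fun i => θ (g i))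
          = ∫⁻ z, L z θ (δ z) ∂P θ := key L hLmeas hLPI δ hδmeas hδPI θ
    rw [Finset.sum_congr rfl fun g _ => this g, hsum]
  constructor
  · intro θ' hθ'
    rw [← hHeq δB hδBmeas hδBPI θ']
    exact hδBfeas θ' hθ'
  · intro δ hδmeas hδPI hδfeas
    have hfeasH : ∀ θ' : Fin n → 𝓣, (∀ i, θ' i ∈ Tbar) → H θ' δ ≤ α := by
      intro θ' hθ'
      rw [hHeq δ hδmeas hδPI θ']
      exact hδfeas θ' hθ'
    have := hδBopt δ hδmeas hfeasH
    rwa [hBeq δB hδBmeas hδBPI, hBeq δ hδmeas hδPI] at this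
end

section
/- (Theorem 2, density form.) Consider a permutation invariant model dominated by a σ-finite measure μ on 𝒵ⁿ, with P_{θ'} = f(·; θ') · μ for a jointly measurable density f, and a permutation invariant measurable loss L : 𝒵ⁿ × 𝒯ⁿ × 𝒜 → [0,∞]. Fix θ ∈ 𝒯ⁿ and define ρ̃_θ(z, a) = Σ_{g∈S_n} L(z, g(θ), a) · f(z; g(θ)). Suppose δ* is a measurable rule such that for μ-almost every z, ρ̃_θ(z, δ*(z)) ≤ ρ̃_θ(z, a) for every a ∈ 𝒜. Then B_θ(δ*) ≤ B_θ(δ) for every measurable rule δ, where B_θ(δ) = (1/n!) Σ_{g∈S_n} ∫ L(z, g(θ), δ(z)) f(z; g(θ)) dμ(z). If in addition δ* is permutation invariant, then R(θ, δ*) ≤ R(θ, δ) for every permutation invariant measurable rule δ; i.e., δ* is the oracle permutation invariant rule at θ. -/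
open MeasureTheory
open scoped ENNReal

/-- **Theorem 2 (density form).** In a dominated permutation invariant model with densities
`f(·; θ')` with respect to a σ-finite measure `μ`, a rule `δ*` which for `μ`-a.e. `z`
minimizes `a ↦ ∑_g L(z, g(θ), a) f(z; g(θ))` minimizes the mixture objective `B_θ` among all
measurable rules; if moreover `δ*` is permutation invariant, it minimizes the risk at `θ`
among all permutation invariant measurable rules. -/
theorem oracle_PI_rule_density_form
    {n : ℕ} (hn : 1 ≤ n)
    {𝓩 𝓣 𝓐 : Type*} [MeasurableSpace 𝓩] [MeasurableSpace 𝓣] [MeasurableSpace 𝓐]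
    -- the model, dominated by a σ-finite measure μ with density f
    (P : (Fin n → 𝓣) → Measure (Fin n → 𝓩))
    (hPprob : ∀ θ, IsProbabilityMeasure (P θ))
    (μ : Measure (Fin n → 𝓩)) [SigmaFinite μ]
    (f : (Fin n → 𝓩) → (Fin n → 𝓣) → ℝ≥0∞)
    (hfmeas : Measurable fun p : (Fin n → 𝓩) × (Fin n → 𝓣) => f p.1 p.2)
    (hdom : ∀ θ' : Fin n → 𝓣, P θ' = μ.withDensity (fun z => f z θ'))
    -- the model is permutation invariant
    (hPmodelPI : ∀ (θ : Fin n → 𝓣) (g : Equiv.Perm (Fin n)),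
      (P θ).map (fun z i => z (g i)) = P (fun i => θ (g i)))
    -- a measurable action of the symmetric group on the action space
    (act : Equiv.Perm (Fin n) → 𝓐 → 𝓐)
    (hact_meas : ∀ g, Measurable (act g))
    (hact_mul : ∀ (g g' : Equiv.Perm (Fin n)) (a : 𝓐), act (g * g') a = act g' (act g a))
    (hact_one : ∀ a : 𝓐, act 1 a = a)
    -- a measurable, permutation invariant loss
    (L : (Fin n → 𝓩) → (Fin n → 𝓣) → 𝓐 → ℝ≥0∞)
    (hLmeas : Measurable fun p : (Fin n → 𝓩) × (Fin n → 𝓣) × 𝓐 => L p.1 p.2.1 p.2.2)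
    (hLPI : ∀ (z : Fin n → 𝓩) (θ : Fin n → 𝓣) (a : 𝓐) (g : Equiv.Perm (Fin n)),
      L (fun i => z (g i)) (fun i => θ (g i)) (act g a) = L z θ a)
    -- fixed parameter value
    (θ : Fin n → 𝓣)
    -- the (unnormalized) posterior expected loss ρ̃_θ
    (ρ : (Fin n → 𝓩) → 𝓐 → ℝ≥0∞)
    (hρ : ∀ (z : Fin n → 𝓩) (a : 𝓐),
      ρ z a = ∑ g : Equiv.Perm (Fin n),
        L z (fun i => θ (g i)) a * f z (fun i => θ (g i)))
    -- the mixture objective B_θ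
    (B : ((Fin n → 𝓩) → 𝓐) → ℝ≥0∞)
    (hB : ∀ δ : (Fin n → 𝓩) → 𝓐,
      B δ = ((n.factorial : ℝ≥0∞))⁻¹ *
        ∑ g : Equiv.Perm (Fin n),
          ∫⁻ z, L z (fun i => θ (g i)) (δ z) * f z (fun i => θ (g i)) ∂μ)
    -- δ* : a measurable rule that μ-a.e. minimizes the posterior expected loss pointwise
    (δstar : (Fin n → 𝓩) → 𝓐) (hδstarMeas : Measurable δstar)
    (hδstarMin : ∀ᵐ z ∂μ, ∀ a : 𝓐, ρ z (δstar z) ≤ ρ z a) :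
    -- (i) δ* minimizes the mixture objective among all measurable rules, and
    -- (ii) if δ* is permutation invariant, it minimizes the risk at θ among PI rules
    (∀ δ : (Fin n → 𝓩) → 𝓐, Measurable δ → B δstar ≤ B δ) ∧
      ((∀ (g : Equiv.Perm (Fin n)) (z : Fin n → 𝓩),
          δstar (fun i => z (g i)) = act g (δstar z)) →
        ∀ δ : (Fin n → 𝓩) → 𝓐, Measurable δ →
          (∀ (g : Equiv.Perm (Fin n)) (z : Fin n → 𝓩), δ (fun i => z (g i)) = act g (δ z)) →
          ∫⁻ z, L z θ (δstar z) ∂P θ ≤ ∫⁻ z, L z θ (δ z) ∂P θ) := by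

  -- measurability of the per-permutation integrand
  have hmeasL : ∀ (θ' : Fin n → 𝓣) (δ : (Fin n → 𝓩) → 𝓐), Measurable δ →
      Measurable (fun z => L z θ' (δ z)) := by
    intro θ' δ hδ
    exact hLmeas.comp (measurable_id.prodMk (measurable_const.prodMk hδ))
  have hmeasf : ∀ θ' : Fin n → 𝓣, Measurable (fun z => f z θ') := by
    intro θ'
    exact hfmeas.comp (measurable_id.prodMk measurable_const)
  have hkey : ∀ δ : (Fin n → 𝓩) → 𝓐, Measurable δ →
      B δ = ((n.factorial : ℝ≥0∞))⁻¹ * ∫⁻ z, ρ z (δ z) ∂μ := by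
    intro δ hδ
    rw [hB]
    congr 1
    rw [← lintegral_finset_sum]
    · exact lintegral_congr fun z => (hρ z (δ z)).symm
    · intro g _
      exact (hmeasL _ δ hδ).mul (hmeasf _)
  have part1 : ∀ δ : (Fin n → 𝓩) → 𝓐, Measurable δ → B δstar ≤ B δ := by
    intro δ hδ
    rw [hkey δstar hδstarMeas, hkey δ hδ]
    refine mul_le_mul_right (lintegral_mono_ae ?_) _
    filter_upwards [hδstarMin] with z hz using hz (δ z)
  refine ⟨part1, ?_⟩
  intro hPIstar δ hδ hPIδ
  -- For a PI rule, B equals the risk at θ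
  have hrisk : ∀ δ' : (Fin n → 𝓩) → 𝓐, Measurable δ' →
      (∀ (g : Equiv.Perm (Fin n)) (z : Fin n → 𝓩), δ' (fun i => z (g i)) = act g (δ' z)) →
      B δ' = ∫⁻ z, L z θ (δ' z) ∂P θ := by
    intro δ' hδ' hPI'
    have hterm : ∀ g : Equiv.Perm (Fin n),
        ∫⁻ z, L z (fun i => θ (g i)) (δ' z) * f z (fun i => θ (g i)) ∂μ
          = ∫⁻ z, L z θ (δ' z) ∂P θ := by
      intro g
      have hmg : Measurable (fun z : Fin n → 𝓩 => fun i => z (g i)) :=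
        measurable_pi_lambda _ fun i => measurable_pi_apply (g i)
      calc ∫⁻ z, L z (fun i => θ (g i)) (δ' z) * f z (fun i => θ (g i)) ∂μ
          = ∫⁻ z, ((fun z => f z (fun i => θ (g i))) * fun z => L z (fun i => θ (g i)) (δ' z)) z ∂μ := by
            refine lintegral_congr fun z => ?_
            simp [mul_comm]
        _ = ∫⁻ z, L z (fun i => θ (g i)) (δ' z)
              ∂(μ.withDensity (fun z => f z (fun i => θ (g i)))) :=
            (lintegral_withDensity_eq_lintegral_mul μ (hmeasf _) (hmeasL _ δ' hδ')).symm
        _ = ∫⁻ z, L z (fun i => θ (g i)) (δ' z) ∂P (fun i => θ (g i)) := by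
            rw [hdom]
        _ = ∫⁻ z, L z (fun i => θ (g i)) (δ' z) ∂((P θ).map (fun z i => z (g i))) := by
            rw [hPmodelPI θ g]
        _ = ∫⁻ z, L (fun i => z (g i)) (fun i => θ (g i)) (δ' (fun i => z (g i))) ∂P θ :=
            lintegral_map (hmeasL _ δ' hδ') hmg
        _ = ∫⁻ z, L z θ (δ' z) ∂P θ := by
            refine lintegral_congr fun z => ?_
            rw [hPI' g z, hLPI z θ (δ' z) g]
    rw [hB]
    simp only [hterm]
    rw [Finset.sum_const, Finset.card_univ, Fintype.card_perm, Fintype.card_fin,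
      nsmul_eq_mul, ← mul_assoc,
      ENNReal.inv_mul_cancel (by exact_mod_cast Nat.factorial_ne_zero n)
        (ENNReal.natCast_ne_top _), one_mul]
  rw [← hrisk δstar hδstarMeas hPIstar, ← hrisk δ hδ hPIδ]
  exact part1 δ hδ
end

section
/- (Oracle PI rule for a constrained problem via the Lagrangian mixture problem.) Consider a permutation invariant model and permutation invariant measurable functions L, h : 𝒵ⁿ × 𝒯ⁿ × 𝒜 → [0,∞) (PI with respect to the same action ã). Fix θ ∈ 𝒯ⁿ, λ ≥ 0, α ≥ 0, and for a measurable rule δ write B_θ^F(δ) = (1/n!) Σ_{g∈S_n} ∫ F(z, g(θ), δ(z)) dP_{g(θ)}(z) for F ∈ {L, h, L+λh}, assumed finite for the rules considered. Suppose δ_λ is a permutation invariant measurable rule such that B_θ^{L+λh}(δ_λ) ≤ B_θ^{L+λh}(δ) for every measurable rule δ, and B_θ^{h}(δ_λ) = α. Then ∫ h(z, θ, δ_λ(z)) dP_θ(z) = α, and for every permutation invariant measurable rule δ with ∫ h(z, θ, δ(z)) dP_θ(z) ≤ α, one has R(θ, δ_λ) ≤ R(θ, δ), where R(θ, δ) =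 ∫ L(z, θ, δ(z)) dP_θ(z). -/
open MeasureTheory
open scoped ENNReal

/-- **Oracle PI rule for a constrained problem via the Lagrangian mixture problem.**
If a permutation invariant rule `δ_λ` minimizes the mixture Lagrangian `B_θ^{L+λh}` over all
measurable rules and satisfies `B_θ^h(δ_λ) = α`, then `δ_λ` exactly meets the original
constraint at `θ` and minimizes the risk at `θ` among all permutation invariant measurable
rules satisfying the original constraint at `θ`. -/
theorem oracle_PI_rule_lagrangian_mixture
    {n : ℕ} (hn : 1 ≤ n)
    {𝓩 𝓣 𝓐 : Type*} [MeasurableSpace 𝓩] [MeasurableSpace 𝓣] [MeasurableSpace 𝓐]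
    -- the model
    (P : (Fin n → 𝓣) → Measure (Fin n → 𝓩))
    (hPprob : ∀ θ, IsProbabilityMeasure (P θ))
    -- the model is permutation invariant
    (hPmodelPI : ∀ (θ : Fin n → 𝓣) (g : Equiv.Perm (Fin n)),
      (P θ).map (fun z i => z (g i)) = P (fun i => θ (g i)))
    -- a measurable action of the symmetric group on the action space
    (act : Equiv.Perm (Fin n) → 𝓐 → 𝓐)
    (hact_meas : ∀ g, Measurable (act g))
    (hact_mul : ∀ (g g' : Equiv.Perm (Fin n)) (a : 𝓐), act (g * g') a = act g' (act g a))
    (hact_one : ∀ a : 𝓐, act 1 a = a)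
    -- measurable, permutation invariant, finite-valued functions L and h
    (L h : (Fin n → 𝓩) → (Fin n → 𝓣) → 𝓐 → ℝ≥0∞)
    (hLmeas : Measurable fun p : (Fin n → 𝓩) × (Fin n → 𝓣) × 𝓐 => L p.1 p.2.1 p.2.2)
    (hhmeas : Measurable fun p : (Fin n → 𝓩) × (Fin n → 𝓣) × 𝓐 => h p.1 p.2.1 p.2.2)
    (hLfin : ∀ z θ' a, L z θ' a ≠ ⊤) (hhfin : ∀ z θ' a, h z θ' a ≠ ⊤)
    (hLPI : ∀ (z : Fin n → 𝓩) (θ' : Fin n → 𝓣) (a : 𝓐) (g : Equiv.Perm (Fin n)),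
      L (fun i => z (g i)) (fun i => θ' (g i)) (act g a) = L z θ' a)
    (hhPI : ∀ (z : Fin n → 𝓩) (θ' : Fin n → 𝓣) (a : 𝓐) (g : Equiv.Perm (Fin n)),
      h (fun i => z (g i)) (fun i => θ' (g i)) (act g a) = h z θ' a)
    -- fixed parameter value, multiplier and level
    (θ : Fin n → 𝓣) (lam : ℝ≥0∞) (hlamfin : lam ≠ ⊤) (α : ℝ≥0∞) (hαfin : α ≠ ⊤)
    -- the mixture functionals B_θ^L, B_θ^h, B_θ^{L+λh}
    (BL Bh BLag : ((Fin n → 𝓩) → 𝓐) → ℝ≥0∞)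
    (hBL : ∀ δ : (Fin n → 𝓩) → 𝓐,
      BL δ = ((n.factorial : ℝ≥0∞))⁻¹ * ∑ g : Equiv.Perm (Fin n),
        ∫⁻ z, L z (fun i => θ (g i)) (δ z) ∂P (fun i => θ (g i)))
    (hBh : ∀ δ : (Fin n → 𝓩) → 𝓐,
      Bh δ = ((n.factorial : ℝ≥0∞))⁻¹ * ∑ g : Equiv.Perm (Fin n),
        ∫⁻ z, h z (fun i => θ (g i)) (δ z) ∂P (fun i => θ (g i)))
    (hBLag : ∀ δ : (Fin n → 𝓩) → 𝓐,
      BLag δ = ((n.factorial : ℝ≥0∞))⁻¹ * ∑ g : Equiv.Perm (Fin n),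
        ∫⁻ z, (L z (fun i => θ (g i)) (δ z) + lam * h z (fun i => θ (g i)) (δ z))
          ∂P (fun i => θ (g i)))
    -- δ_λ : a permutation invariant measurable rule minimizing the mixture Lagrangian,
    -- with finite mixture objectives, meeting the mixture constraint with equality
    (δlam : (Fin n → 𝓩) → 𝓐) (hδlamMeas : Measurable δlam)
    (hδlamPI : ∀ (g : Equiv.Perm (Fin n)) (z : Fin n → 𝓩),
      δlam (fun i => z (g i)) = act g (δlam z))
    (hδlamFin : BL δlam ≠ ⊤)
    (hδlamOpt : ∀ δ : (Fin n → 𝓩) → 𝓐, Measurable δ → BLag δlam ≤ BLag δ)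
    (hδlamCon : Bh δlam = α) :
    -- δ_λ meets the original constraint at θ with equality, and minimizes the risk at θ
    -- among all permutation invariant measurable rules meeting the constraint at θ
    (∫⁻ z, h z θ (δlam z) ∂P θ = α) ∧
      ∀ δ : (Fin n → 𝓩) → 𝓐, Measurable δ →
        (∀ (g : Equiv.Perm (Fin n)) (z : Fin n → 𝓩), δ (fun i => z (g i)) = act g (δ z)) →
        (∫⁻ z, h z θ (δ z) ∂P θ ≤ α) →
        ∫⁻ z, L z θ (δlam z) ∂P θ ≤ ∫⁻ z, L z θ (δ z) ∂P θ := by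

  have hfactne : (n.factorial : ℝ≥0∞) ≠ 0 := by
    exact_mod_cast Nat.cast_ne_zero.mpr n.factorial_ne_zero
  have hfactnetop : (n.factorial : ℝ≥0∞) ≠ ⊤ := ENNReal.natCast_ne_top _
  -- key reduction: for PI F and PI δ, the mixture functional equals the single integral at θ
  have key : ∀ (F : (Fin n → 𝓩) → (Fin n → 𝓣) → 𝓐 → ℝ≥0∞),
      Measurable (fun p : (Fin n → 𝓩) × (Fin n → 𝓣) × 𝓐 => F p.1 p.2.1 p.2.2) →
      (∀ (z : Fin n → 𝓩) (θ' : Fin n → 𝓣) (a : 𝓐) (g : Equiv.Perm (Fin n)),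
        F (fun i => z (g i)) (fun i => θ' (g i)) (act g a) = F z θ' a) →
      ∀ (δ : (Fin n → 𝓩) → 𝓐), Measurable δ →
      (∀ (g : Equiv.Perm (Fin n)) (z : Fin n → 𝓩), δ (fun i => z (g i)) = act g (δ z)) →
      ((n.factorial : ℝ≥0∞))⁻¹ * ∑ g : Equiv.Perm (Fin n),
        ∫⁻ z, F z (fun i => θ (g i)) (δ z) ∂P (fun i => θ (g i))
        = ∫⁻ z, F z θ (δ z) ∂P θ := by
    intro F hF hFPI δ hδm hδPI
    have step : ∀ g : Equiv.Perm (Fin n),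
        ∫⁻ z, F z (fun i => θ (g i)) (δ z) ∂P (fun i => θ (g i))
          = ∫⁻ z, F z θ (δ z) ∂P θ := by
      intro g
      have hmapmeas : Measurable (fun z : Fin n → 𝓩 => fun i => z (g i)) :=
        measurable_pi_lambda _ (fun i => measurable_pi_apply _)
      have hfmeas : Measurable (fun z : Fin n → 𝓩 => F z (fun i => θ (g i)) (δ z)) :=
        hF.comp (measurable_id.prodMk (measurable_const.prodMk hδm))
      rw [← hPmodelPI θ g, lintegral_map hfmeas hmapmeas]
      refine lintegral_congr fun z => ?_
      rw [hδPI g z, hFPI z θ (δ z) g]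
    simp_rw [step]
    rw [Finset.sum_const, nsmul_eq_mul, ← mul_assoc]
    have hcard : ((Finset.univ : Finset (Equiv.Perm (Fin n))).card : ℝ≥0∞)
        = (n.factorial : ℝ≥0∞) := by
      rw [Finset.card_univ, Fintype.card_perm, Fintype.card_fin]
    rw [hcard, ENNReal.inv_mul_cancel hfactne hfactnetop, one_mul]
  -- measurability of the Lagrangian integrand
  have hLagmeas : Measurable (fun p : (Fin n → 𝓩) × (Fin n → 𝓣) × 𝓐 =>
      L p.1 p.2.1 p.2.2 + lam * h p.1 p.2.1 p.2.2) := hLmeas.add (hhmeas.const_mul lam)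
  have hLagPI : ∀ (z : Fin n → 𝓩) (θ' : Fin n → 𝓣) (a : 𝓐) (g : Equiv.Perm (Fin n)),
      L (fun i => z (g i)) (fun i => θ' (g i)) (act g a)
        + lam * h (fun i => z (g i)) (fun i => θ' (g i)) (act g a)
        = L z θ' a + lam * h z θ' a := by
    intro z θ' a g; rw [hLPI, hhPI]
  -- splitting the single Lagrangian integral
  have hsplit : ∀ (δ : (Fin n → 𝓩) → 𝓐), Measurable δ →
      ∫⁻ z, (L z θ (δ z) + lam * h z θ (δ z)) ∂P θ
        = (∫⁻ z, L z θ (δ z) ∂P θ) + lam * ∫⁻ z, h z θ (δ z) ∂P θ := by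
    intro δ hδm
    have hL' : Measurable (fun z : Fin n → 𝓩 => L z θ (δ z)) :=
      hLmeas.comp (measurable_id.prodMk (measurable_const.prodMk hδm))
    have hh' : Measurable (fun z : Fin n → 𝓩 => h z θ (δ z)) :=
      hhmeas.comp (measurable_id.prodMk (measurable_const.prodMk hδm))
    rw [lintegral_add_left hL', lintegral_const_mul lam hh']
  -- the three functionals at PI rules
  have hBLag' : ∀ (δ : (Fin n → 𝓩) → 𝓐), Measurable δ →
      (∀ (g : Equiv.Perm (Fin n)) (z : Fin n → 𝓩), δ (fun i => z (g i)) = act g (δ z)) →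
      BLag δ = (∫⁻ z, L z θ (δ z) ∂P θ) + lam * ∫⁻ z, h z θ (δ z) ∂P θ := by
    intro δ hδm hδPI
    have hk := key (fun z θ' a => L z θ' a + lam * h z θ' a) hLagmeas hLagPI δ hδm hδPI
    rw [hBLag δ, hk, hsplit δ hδm]
  have hh_lam : ∫⁻ z, h z θ (δlam z) ∂P θ = α := by
    rw [← key h hhmeas hhPI δlam hδlamMeas hδlamPI, ← hBh, hδlamCon]
  refine ⟨hh_lam, fun δ hδm hδPI hδcon => ?_⟩
  have h1 : BLag δlam ≤ BLag δ := hδlamOpt δ hδm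
  rw [hBLag' δlam hδlamMeas hδlamPI, hBLag' δ hδm hδPI, hh_lam] at h1
  have h2 : (∫⁻ z, L z θ (δlam z) ∂P θ) + lam * α
      ≤ (∫⁻ z, L z θ (δ z) ∂P θ) + lam * α :=
    h1.trans (add_le_add_right (mul_le_mul_right hδcon lam) _)
  have hfin : lam * α ≠ ⊤ := ENNReal.mul_ne_top hlamfin hαfin
  exact ENNReal.le_of_add_le_add_right hfin h2
end
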